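/- Fix n ∈ ℕ and boolean vectors m, v : Fin n → Bool. Let G be the simple graph on the vertex type (Fin n) ⊕ Bool, where a = inr false, b = inr true, and u_j = inl j for j : Fin n, with adjacency given by: a is adjacent to b; a is adjacent to u_j iff v j = true; u_j is adjacent to b iff m j = true; and there are no other edges. Then G is acyclic (contains no cycle) if and only if for every j : Fin n it is not the case that both v j = true and m j = true. (Equivalently, G contains a cycle iff the boolean inner product of m and v is 1.) -/

import Mathlib

open SimpleGraph


/-- OMv gadget for fully retroactive MSF: same gadget as for connectivity together with the
edge `{a, b}`. The graph is acyclic iff the boolean inner product of `m` and `v` is `0`. -/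
theorem omv_msf_gadget_acyclic (n : ℕ) (m v : Fin n → Bool)
    (G : SimpleGraph (Fin n ⊕ Bool))
    (hG : ∀ x y : Fin n ⊕ Bool, G.Adj x y ↔
      ((x = Sum.inr false ∧ y = Sum.inr true) ∨ (x = Sum.inr true ∧ y = Sum.inr false)) ∨
      (∃ j : Fin n, v j = true ∧
        ((x = Sum.inr false ∧ y = Sum.inl j) ∨ (x = Sum.inl j ∧ y = Sum.inr false))) ∨
      (∃ j : Fin n, m j = true ∧
        ((x = Sum.inl j ∧ y = Sum.inr true) ∨ (x = Sum.inr true ∧ y = Sum.inl j)))) :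
    G.IsAcyclic ↔ ∀ j : Fin n, ¬(v j = true ∧ m j = true) := by
  constructor
  · intro hA j hj
    have hab : G.Adj (Sum.inr true) (Sum.inr false) := by rw [hG]; tauto
    have hau : G.Adj (Sum.inr false) (Sum.inl j) := by
      rw [hG]; exact Or.inr (Or.inl ⟨j, hj.1, Or.inl ⟨rfl, rfl⟩⟩)
    have hub : G.Adj (Sum.inl j) (Sum.inr true) := by
      rw [hG]; exact Or.inr (Or.inr ⟨j, hj.2, Or.inl ⟨rfl, rfl⟩⟩)
    have hc : (Walk.cons hab (Walk.cons hau (Walk.cons hub Walk.nil))).IsCycle := by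
      rw [Walk.cons_isCycle_iff]
      constructor
      · rw [Walk.isPath_def]
        simp
      · simp [Sym2.eq, Sym2.rel_iff']
    exact hA _ hc
  · intro h x c hc
    have key : ∀ (j : Fin n) (y : Fin n ⊕ Bool), G.Adj (Sum.inl j) y →
        (v j = true ∧ y = Sum.inr false) ∨ (m j = true ∧ y = Sum.inr true) := by
      intro j y hy
      rw [hG] at hy
      rcases hy with (⟨h1, _⟩ | ⟨h1, _⟩) | ⟨j', hv', ⟨h1, _⟩ | ⟨h1, h2⟩⟩ | ⟨j', hm', ⟨h1, h2⟩ | ⟨h1, _⟩⟩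
      · exact absurd h1 (by simp)
      · exact absurd h1 (by simp)
      · exact absurd h1 (by simp)
      · cases Sum.inl.inj h1; exact Or.inl ⟨hv', h2⟩
      · cases Sum.inl.inj h1; exact Or.inr ⟨hm', h2⟩
      · exact absurd h1 (by simp)
    have huniq : ∀ (j : Fin n) (y z : Fin n ⊕ Bool),
        G.Adj (Sum.inl j) y → G.Adj (Sum.inl j) z → y = z := by
      intro j y z hy hz
      rcases key j y hy with ⟨hv1, rfl⟩ | ⟨hm1, rfl⟩ <;>
        rcases key j z hz with ⟨hv2, rfl⟩ | ⟨hm2, rfl⟩ <;>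
        first | rfl | exact absurd ⟨by assumption, by assumption⟩ (h j)
    have h3 := hc.three_le_length
    have hnd := hc.support_nodup
    have hexj : ∃ j, Sum.inl j ∈ c.support := by
      by_contra hno
      push_neg at hno
      have hsub : c.support.tail ⊆ [Sum.inr false, Sum.inr true] := by
        intro y hy
        have hy' : y ∈ c.support := List.mem_of_mem_tail hy
        rcases y with j' | b
        · exact absurd hy' (hno j')
        · cases b <;> simp
      have hle := (List.subperm_of_subset hnd hsub).length_le
      have hlen : c.support.length = c.length + 1 := c.length_support
      rw [List.length_tail, hlen] at hle
      simp at hle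
      omega
    obtain ⟨j, hj⟩ := hexj
    have hc' := hc.rotate hj
    have h3' : 3 ≤ (c.rotate _ hj).length := hc'.three_le_length
    obtain ⟨w, hadj, q, heq⟩ := Walk.not_nil_iff.mp hc'.not_nil
    rw [heq] at hc' h3'
    rw [Walk.cons_isCycle_iff] at hc'
    obtain ⟨hq, hne⟩ := hc'
    have hqnil : ¬ q.reverse.Nil := by
      rw [Walk.not_nil_iff_lt_length, Walk.length_reverse]
      simp only [Walk.length_cons] at h3'
      omega
    obtain ⟨z, hadj2, r, hrev⟩ := Walk.not_nil_iff.mp hqnil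
    have hzw : z = w := huniq j z w hadj2 hadj
    apply hne
    have hmem : s(Sum.inl j, z) ∈ q.reverse.edges := by rw [hrev]; simp
    rw [Walk.edges_reverse, List.mem_reverse] at hmem
    rwa [hzw] at hmem
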